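/- Let A be a commutative ring and B an A-algebra that is free of rank n with A-basis ε = (ε_1, …, ε_n). Let μ: B ⊗_A B → B be the multiplication map, J = ker μ, and let δ ∈ Ann(J) be written δ = u_1 ⊗ ε_1 + ⋯ + u_n ⊗ ε_n with u_j ∈ B, and set b = μ(δ). Then N_{B/A}(b) = det(P_u) · Disc(ε), where P_u ∈ M_n(A) is the matrix with rows the coordinates of the u_i in the basis ε and Disc(ε) = det((Tr_{B/A}(ε_i ε_j))_{i,j}). In particular, Disc(ε) divides N_{B/A}(b) in A for every b ∈ μ(Ann(J)). -/

import Mathlib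

open TensorProduct Matrix

namespace NormDiscAux
variable {A B : Type*} [CommRing A] [CommRing B] [Algebra A B]

noncomputable def φ (f : B →ₗ[A] A) : B ⊗[A] B →ₗ[A] B :=
  TensorProduct.lift ((LinearMap.lsmul A B ∘ₗ f).flip)

@[simp] lemma φ_tmul (f : B →ₗ[A] A) (x y : B) : φ f (x ⊗ₜ[A] y) = f y • x := rfl

variable {n : ℕ} (ε : Module.Basis (Fin n) A B)

lemma key_rel (u : Fin n → B)
    (h : (∑ i, u i ⊗ₜ[A] ε i) ∈
      (RingHom.ker (Algebra.TensorProduct.lmul' A : B ⊗[A] B →ₐ[A] B)).annihilator)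
    (f : B →ₗ[A] A) (x : B) :
    ∑ i, f (ε i) • (u i * x) = ∑ i, f (ε i * x) • u i := by
  have hker : (x ⊗ₜ[A] 1 - 1 ⊗ₜ[A] x) ∈
      RingHom.ker (Algebra.TensorProduct.lmul' A : B ⊗[A] B →ₐ[A] B) := by
    simp [RingHom.mem_ker, Algebra.TensorProduct.lmul'_apply_tmul]
  have h0 := Submodule.mem_annihilator.mp h _ hker
  rw [smul_eq_mul, mul_sub, sub_eq_zero] at h0
  have h2 : ∑ i, (u i * x) ⊗ₜ[A] (ε i) = ∑ i, u i ⊗ₜ[A] (ε i * x) := by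
    calc ∑ i, (u i * x) ⊗ₜ[A] (ε i)
        = (∑ i, u i ⊗ₜ[A] ε i) * (x ⊗ₜ[A] 1) := by
          rw [Finset.sum_mul]
          exact Finset.sum_congr rfl fun i _ => by
            rw [Algebra.TensorProduct.tmul_mul_tmul, mul_one]
      _ = (∑ i, u i ⊗ₜ[A] ε i) * (1 ⊗ₜ[A] x) := h0
      _ = ∑ i, u i ⊗ₜ[A] (ε i * x) := by
          rw [Finset.sum_mul]
          exact Finset.sum_congr rfl fun i _ => by
            rw [Algebra.TensorProduct.tmul_mul_tmul, mul_one]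
  have := congrArg (φ f) h2
  simpa [map_sum] using this

lemma main (u : Fin n → B)
    (hu : (∑ i, u i ⊗ₜ[A] ε i) ∈
      (RingHom.ker (Algebra.TensorProduct.lmul' A : B ⊗[A] B →ₐ[A] B)).annihilator) :
    Algebra.norm A (Algebra.TensorProduct.lmul' A (∑ i, u i ⊗ₜ[A] ε i))
      = (Matrix.of fun i j => ε.repr (u i) j).det * Algebra.discr A ε := by
  have hb : Algebra.TensorProduct.lmul' A (∑ i, u i ⊗ₜ[A] ε i) = ∑ i, u i * ε i := by
    rw [map_sum]
    exact Finset.sum_congr rfl fun i _ => Algebra.TensorProduct.lmul'_apply_tmul _ _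
  have stepA : (∑ i, u i * ε i) = ∑ i, Algebra.trace A B (ε i) • u i := by
    have h1 : ∀ j, ∑ i, (ε.coord j) (ε i) • (u i * ε j) = ∑ i, (ε.coord j) (ε i * ε j) • u i :=
      fun j => key_rel ε u hu (ε.coord j) (ε j)
    calc ∑ i, u i * ε i
        = ∑ j, ∑ i, (ε.coord j) (ε i) • (u i * ε j) := by
          rw [Finset.sum_comm]
          refine Finset.sum_congr rfl fun i _ => ?_
          simp [Module.Basis.coord_apply, Module.Basis.repr_self, Finsupp.single_apply, ite_smul]
      _ = ∑ j, ∑ i, (ε.coord j) (ε i * ε j) • u i := by simp_rw [h1]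
      _ = ∑ i, Algebra.trace A B (ε i) • u i := by
          rw [Finset.sum_comm]
          refine Finset.sum_congr rfl fun i _ => ?_
          rw [← Finset.sum_smul]
          congr 1
          rw [Algebra.trace_eq_matrix_trace ε, Matrix.trace]
          refine (Finset.sum_congr rfl fun j _ => ?_).symm
          rw [Matrix.diag_apply, Algebra.leftMulMatrix_eq_repr_mul, Module.Basis.coord_apply]
  have stepB : ∀ j, (∑ i, u i * ε i) * ε j = ∑ i, Algebra.trace A B (ε i * ε j) • u i := by
    intro j
    have h1 := key_rel ε u hu (Algebra.trace A B) (ε j)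
    rw [stepA, Finset.sum_mul]
    simp_rw [smul_mul_assoc]
    exact h1
  have hM : Algebra.leftMulMatrix ε (∑ i, u i * ε i) =
      (Matrix.of fun i j => ε.repr (u i) j)ᵀ * Algebra.traceMatrix A ε := by
    ext k j
    rw [Algebra.leftMulMatrix_eq_repr_mul, stepB j, map_sum, Matrix.mul_apply]
    rw [Finset.sum_apply']
    refine Finset.sum_congr rfl fun i _ => ?_
    rw [_root_.map_smul, Finsupp.smul_apply, smul_eq_mul, Matrix.transpose_apply, Matrix.of_apply,
      Algebra.traceMatrix_apply, Algebra.traceForm_apply, mul_comm]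
  rw [hb, Algebra.norm_eq_matrix_det ε, hM, Matrix.det_mul, Matrix.det_transpose,
    Algebra.discr_def]

end NormDiscAux


/-- Let `B` be an `A`-algebra, free of rank `n` as an `A`-module with basis
`ε`.  Let `μ : B ⊗[A] B → B` be the multiplication map, `J = ker μ`, and let
`δ = Σ_i u_i ⊗ ε_i ∈ Ann J`, `b = μ δ`.  Then `N_{B/A}(b) = det(P_u) * Disc(ε)`, where
`P_u` has rows the coordinates of the `u_i` in the basis `ε` and
`Disc(ε) = det (Tr_{B/A}(ε_i ε_j))_{i,j}`.  In particular `Disc(ε)` divides `N_{B/A}(b)`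
for every `b ∈ μ(Ann J)`. -/
theorem norm_eq_det_mul_discr_of_mem_annihilator
    (A B : Type*) [CommRing A] [CommRing B] [Algebra A B]
    (n : ℕ) (ε : Module.Basis (Fin n) A B) :
    (∀ u : Fin n → B,
      (∑ i, u i ⊗ₜ[A] ε i) ∈
        (RingHom.ker (Algebra.TensorProduct.lmul' A : B ⊗[A] B →ₐ[A] B)).annihilator →
      Algebra.norm A (Algebra.TensorProduct.lmul' A (∑ i, u i ⊗ₜ[A] ε i))
        = (Matrix.of fun i j => ε.repr (u i) j).det * Algebra.discr A ε) ∧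
    ∀ b ∈ Ideal.map (Algebra.TensorProduct.lmul' A : B ⊗[A] B →ₐ[A] B)
        (RingHom.ker (Algebra.TensorProduct.lmul' A : B ⊗[A] B →ₐ[A] B)).annihilator,
      Algebra.discr A ε ∣ Algebra.norm A b := by
  refine ⟨fun u hu => NormDiscAux.main ε u hu, fun b hb => ?_⟩
  have hsurj : Function.Surjective
      (Algebra.TensorProduct.lmul' A : B ⊗[A] B →ₐ[A] B) := fun x =>
    ⟨x ⊗ₜ[A] 1, by rw [Algebra.TensorProduct.lmul'_apply_tmul, mul_one]⟩
  obtain ⟨δ, hδ, rfl⟩ :=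
    (Ideal.mem_map_iff_of_surjective _ hsurj).mp hb
  set β := Algebra.TensorProduct.basis B ε with hβ
  have hδeq : δ = ∑ i, (β.repr δ i) ⊗ₜ[A] ε i := by
    conv_lhs => rw [← β.sum_repr δ]
    refine Finset.sum_congr rfl fun i _ => ?_
    rw [hβ, Algebra.TensorProduct.basis_apply, TensorProduct.smul_tmul', smul_eq_mul, mul_one]
  rw [hδeq] at hδ ⊢
  exact ⟨(Matrix.of fun i j => ε.repr (β.repr δ i) j).det,
    by rw [NormDiscAux.main ε _ hδ, mul_comm]⟩
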